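/- For any x > 0 and y > 0, the quantity φ(x,y) = E|exp(−x²y²/8 + (xy/4)ξ) − 1|, where ξ is a standard normal random variable, satisfies 0 < φ(x,y) < 1; moreover φ(x,y)² ≤ e^{−x²y²/8} − 2e^{−3x²y²/32} + 1. -/

import Mathlib

open MeasureTheory ProbabilityTheory

private lemma integral_gaussianReal_eq (g : ℝ → ℝ) :
    ∫ ξ, g ξ ∂gaussianReal 0 1 = ∫ x, gaussianPDFReal 0 1 x * g x := by
  rw [gaussianReal_of_var_ne_zero 0 one_ne_zero]
  have h : gaussianPDF 0 1
      = fun x => ((Real.toNNReal (gaussianPDFReal 0 1 x) : NNReal) : ENNReal) := rfl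
  rw [h, integral_withDensity_eq_integral_smul
      ((measurable_gaussianPDFReal 0 1).real_toNNReal)]
  congr 1
  funext x
  rw [NNReal.smul_def, smul_eq_mul, Real.coe_toNNReal _ (gaussianPDFReal_nonneg 0 1 x)]

private lemma pdf_exp_key (t x : ℝ) :
    gaussianPDFReal 0 1 x * Real.exp (t * x)
      = Real.exp (t ^ 2 / 2) * gaussianPDFReal t 1 x := by
  simp only [gaussianPDFReal, NNReal.coe_one, mul_one, sub_zero]
  rw [mul_assoc, ← Real.exp_add, mul_left_comm, ← Real.exp_add]
  ring_nf

private lemma integrable_exp_gaussian (t : ℝ) :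
    Integrable (fun ξ => Real.exp (t * ξ)) (gaussianReal 0 1) := by
  rw [gaussianReal_of_var_ne_zero 0 one_ne_zero]
  have h : gaussianPDF 0 1
      = fun x => ((Real.toNNReal (gaussianPDFReal 0 1 x) : NNReal) : ENNReal) := rfl
  rw [h, integrable_withDensity_iff_integrable_smul
      ((measurable_gaussianPDFReal 0 1).real_toNNReal)]
  have : (fun x => Real.toNNReal (gaussianPDFReal 0 1 x)
      • Real.exp (t * x)) = fun x => Real.exp (t ^ 2 / 2) * gaussianPDFReal t 1 x := by
    funext x
    rw [NNReal.smul_def, smul_eq_mul, Real.coe_toNNReal _ (gaussianPDFReal_nonneg 0 1 x)]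
    exact pdf_exp_key t x
  rw [this]
  exact (integrable_gaussianPDFReal t 1).const_mul _

private lemma mgf_gaussian (t : ℝ) :
    ∫ ξ, Real.exp (t * ξ) ∂gaussianReal 0 1 = Real.exp (t ^ 2 / 2) := by
  rw [integral_gaussianReal_eq]
  simp_rw [pdf_exp_key]
  rw [integral_const_mul, integral_gaussianPDFReal_eq_one t one_ne_zero, mul_one]

/-- For any `x > 0` and `y > 0`, the quantity `φ(x,y) = E|exp(−x²y²/8 + (xy/4)ξ) − 1|`,
where `ξ` is a standard normal random variable, satisfies `0 < φ(x,y) < 1`; moreover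
`φ(x,y)² ≤ e^{−x²y²/8} − 2e^{−3x²y²/32} + 1`. -/
theorem phi_mem_Ioo_and_sq_le (x y : ℝ) (hx : 0 < x) (hy : 0 < y) :
    (0 : ℝ) < (∫ ξ, |Real.exp (-(x ^ 2 * y ^ 2) / 8 + x * y / 4 * ξ) - 1| ∂gaussianReal 0 1) ∧
    (∫ ξ, |Real.exp (-(x ^ 2 * y ^ 2) / 8 + x * y / 4 * ξ) - 1| ∂gaussianReal 0 1) < 1 ∧
    (∫ ξ, |Real.exp (-(x ^ 2 * y ^ 2) / 8 + x * y / 4 * ξ) - 1| ∂gaussianReal 0 1) ^ 2 ≤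
      Real.exp (-(x ^ 2 * y ^ 2) / 8) - 2 * Real.exp (-(3 * x ^ 2 * y ^ 2) / 32) + 1 := by
  set μ := gaussianReal 0 1
  set t : ℝ := x * y / 4 with ht
  set a : ℝ := -(x ^ 2 * y ^ 2) / 8 with ha
  have ht2 : t ^ 2 = x ^ 2 * y ^ 2 / 16 := by rw [ht]; ring
  have ha2 : a = -2 * t ^ 2 := by rw [ha, ht2]; ring
  have ht0 : 0 < t := by positivity
  -- the function
  set g : ℝ → ℝ := fun ξ => Real.exp (a + t * ξ) - 1 with hg
  have hexp_split : ∀ ξ, Real.exp (a + t * ξ) = Real.exp a * Real.exp (t * ξ) := fun ξ =>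
    Real.exp_add a (t * ξ)
  -- integrability facts
  have hZ : Integrable (fun ξ => Real.exp (a + t * ξ)) μ := by
    simp_rw [hexp_split]
    exact (integrable_exp_gaussian t).const_mul _
  have hg_int : Integrable g μ := hZ.sub (integrable_const 1)
  have hZ2 : Integrable (fun ξ => Real.exp (a + t * ξ) ^ 2) μ := by
    have : (fun ξ => Real.exp (a + t * ξ) ^ 2)
        = fun ξ => Real.exp (2 * a) * Real.exp (2 * t * ξ) := by
      funext ξ
      rw [← Real.exp_add, ← Real.exp_nat_mul]
      ring_nf
    rw [this]
    exact (integrable_exp_gaussian (2 * t)).const_mul _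
  have hg2_int : Integrable (fun ξ => g ξ ^ 2) μ := by
    have : (fun ξ => g ξ ^ 2) = fun ξ =>
        Real.exp (a + t * ξ) ^ 2 - 2 * Real.exp (a + t * ξ) + 1 := by
      funext ξ; rw [hg]; ring
    rw [this]
    exact (hZ2.sub (hZ.const_mul 2)).add (integrable_const 1)
  -- moments
  have hEZ : ∫ ξ, Real.exp (a + t * ξ) ∂μ = Real.exp (-(3 * x ^ 2 * y ^ 2) / 32) := by
    simp_rw [hexp_split]
    rw [integral_const_mul, mgf_gaussian, ← Real.exp_add]
    congr 1
    rw [ha2, ht2]; ring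
  have hEZ2 : ∫ ξ, Real.exp (a + t * ξ) ^ 2 ∂μ = Real.exp (-(x ^ 2 * y ^ 2) / 8) := by
    have h2 : (fun ξ => Real.exp (a + t * ξ) ^ 2)
        = fun ξ => Real.exp (2 * a) * Real.exp (2 * t * ξ) := by
      funext ξ
      rw [← Real.exp_add, ← Real.exp_nat_mul]
      ring_nf
    rw [h2, integral_const_mul, mgf_gaussian, ← Real.exp_add]
    congr 1
    rw [ha2, ht2]; ring
  have hEg2 : ∫ ξ, g ξ ^ 2 ∂μ
      = Real.exp (-(x ^ 2 * y ^ 2) / 8) - 2 * Real.exp (-(3 * x ^ 2 * y ^ 2) / 32) + 1 := by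
    have h2 : (fun ξ => g ξ ^ 2) = fun ξ =>
        Real.exp (a + t * ξ) ^ 2 - 2 * Real.exp (a + t * ξ) + 1 := by
      funext ξ; rw [hg]; ring
    rw [h2]
    have hA : Integrable (fun ξ => Real.exp (a + t * ξ) ^ 2 - 2 * Real.exp (a + t * ξ)) μ :=
      hZ2.sub (hZ.const_mul 2)
    rw [integral_add hA (integrable_const 1),
      integral_sub hZ2 (hZ.const_mul 2), integral_const_mul, hEZ, hEZ2]
    simp [μ]
  -- Cauchy-Schwarz via variance
  have habs_memℒ2 : MemLp (fun ξ => |g ξ|) 2 μ := by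
    refine (memLp_two_iff_integrable_sq hg_int.abs.aestronglyMeasurable).2 ?_
    simpa [sq_abs] using hg2_int
  have hvar := variance_nonneg (fun ξ => |g ξ|) μ
  rw [variance_eq_sub habs_memℒ2] at hvar
  have hCS : (∫ ξ, |g ξ| ∂μ) ^ 2 ≤ ∫ ξ, g ξ ^ 2 ∂μ := by
    have : (fun ξ => |g ξ| ^ 2) = fun ξ => g ξ ^ 2 := by funext ξ; rw [sq_abs]
    simp only [Pi.pow_apply] at hvar
    rw [this] at hvar
    linarith
  have hφg : (∫ ξ, |Real.exp (-(x ^ 2 * y ^ 2) / 8 + x * y / 4 * ξ) - 1| ∂gaussianReal 0 1)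
      = ∫ ξ, |g ξ| ∂μ := rfl
  rw [hφg]
  have hsq : (∫ ξ, |g ξ| ∂μ) ^ 2
      ≤ Real.exp (-(x ^ 2 * y ^ 2) / 8) - 2 * Real.exp (-(3 * x ^ 2 * y ^ 2) / 32) + 1 := by
    rw [← hEg2]; exact hCS
  -- positivity: φ ≥ |E g| = 1 - exp(-3t²/2) > 0
  have hpos : 0 < ∫ ξ, |g ξ| ∂μ := by
    have h1 : |∫ ξ, g ξ ∂μ| ≤ ∫ ξ, |g ξ| ∂μ := by
      simpa [Real.norm_eq_abs] using norm_integral_le_integral_norm (μ := μ) g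
    have h2 : ∫ ξ, g ξ ∂μ = Real.exp (-(3 * x ^ 2 * y ^ 2) / 32) - 1 := by
      rw [hg, integral_sub hZ (integrable_const 1), hEZ]
      simp [μ]
    have h3 : Real.exp (-(3 * x ^ 2 * y ^ 2) / 32) < 1 := by
      rw [Real.exp_lt_one_iff]
      nlinarith
    rw [h2] at h1
    rw [abs_sub_comm, abs_of_pos (by linarith)] at h1
    linarith
  refine ⟨hpos, ?_, hsq⟩
  -- φ < 1 since φ² < 1
  have hrhs : Real.exp (-(x ^ 2 * y ^ 2) / 8) - 2 * Real.exp (-(3 * x ^ 2 * y ^ 2) / 32) + 1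
      < 1 := by
    have h1 : Real.exp (-(x ^ 2 * y ^ 2) / 8) < 2 * Real.exp (-(3 * x ^ 2 * y ^ 2) / 32) := by
      have h2 : Real.exp (-(x ^ 2 * y ^ 2) / 8)
          = Real.exp (-(x ^ 2 * y ^ 2) / 32) * Real.exp (-(3 * x ^ 2 * y ^ 2) / 32) := by
        rw [← Real.exp_add]; congr 1; ring
      have h3 : Real.exp (-(x ^ 2 * y ^ 2) / 32) < 2 := by
        calc Real.exp (-(x ^ 2 * y ^ 2) / 32) ≤ 1 := by
              rw [Real.exp_le_one_iff]; nlinarith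
          _ < 2 := one_lt_two
      rw [h2]
      exact mul_lt_mul_of_pos_right h3 (Real.exp_pos _)
    linarith
  nlinarith [hsq, hpos]
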